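/- Let ω = e^{2πi/3}, Λ = ℤω ⊕ ℤ, θ(z) := −∑_{n∈ℤ} exp(πi(n+1/2)²ω + 2πi(n+1/2)(z+1/2)), z(k) := √3·k/(4πi), and F_k(z) := e^{(i/2)(z−conj(z))k}·θ(z−z(k))/θ(z) for z ∉ Λ. Then for every k ∈ ℂ, every m,n ∈ ℤ and every z ∈ ℂ∖Λ, one has F_k(z + m + nω) = F_k(z); that is, F_k is Λ-periodic on ℂ∖Λ. -/

import Mathlib

open Complex

noncomputable section

/-- `ω = e^{2πi/3}`. -/
def ω : ℂ := Complex.exp (2 * (Real.pi : ℂ) * Complex.I / 3)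

/-- The hexagonal lattice `Λ = ℤω ⊕ ℤ`. -/
def inΛ (γ : ℂ) : Prop := ∃ m n : ℤ, γ = (m : ℂ) * ω + (n : ℂ)

/-- The Jacobi theta function `θ₁(z|ω)`. -/
def θ (z : ℂ) : ℂ :=
  -∑' n : ℤ, Complex.exp ((Real.pi : ℂ) * Complex.I * ((n : ℂ) + 1/2)^2 * ω
      + 2 * (Real.pi : ℂ) * Complex.I * ((n : ℂ) + 1/2) * (z + 1/2))

/-- `z(k) = √3 k/(4πi)`. -/
def zmap (k : ℂ) : ℂ := (Real.sqrt 3 : ℂ) * k / (4 * (Real.pi : ℂ) * Complex.I)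

/-- `F_k(z) = e^{(i/2)(z - z̄)k} θ(z - z(k))/θ(z)`. -/
def F (k z : ℂ) : ℂ :=
  Complex.exp ((Complex.I / 2) * (z - (starRingEnd ℂ) z) * k) * θ (z - zmap k) / θ z

def tf (z : ℂ) (n : ℤ) : ℂ :=
  Complex.exp ((Real.pi : ℂ) * Complex.I * ((n : ℂ) + 1/2)^2 * ω
      + 2 * (Real.pi : ℂ) * Complex.I * ((n : ℂ) + 1/2) * (z + 1/2))

lemma θ_eq (z : ℂ) : θ z = -∑' n : ℤ, tf z n := rfl

lemma exp_int_two_pi (n : ℤ) : Complex.exp ((n : ℂ) * (2 * (Real.pi : ℂ) * Complex.I)) = 1 := by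
  rw [Complex.exp_int_mul, Complex.exp_two_pi_mul_I, one_zpow]

lemma theta_add_one (z : ℂ) :
    θ (z + 1) = Complex.exp ((Real.pi : ℂ) * Complex.I) * θ z := by
  rw [θ_eq, θ_eq, mul_neg, ← tsum_mul_left, neg_inj]
  refine tsum_congr fun n => ?_
  rw [tf, tf, ← Complex.exp_add]
  have h : (Real.pi : ℂ) * Complex.I * ((n : ℂ) + 1/2)^2 * ω
      + 2 * (Real.pi : ℂ) * Complex.I * ((n : ℂ) + 1/2) * (z + 1 + 1/2)
      = ((Real.pi : ℂ) * Complex.I + ((Real.pi : ℂ) * Complex.I * ((n : ℂ) + 1/2)^2 * ω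
      + 2 * (Real.pi : ℂ) * Complex.I * ((n : ℂ) + 1/2) * (z + 1/2)))
      + (n : ℂ) * (2 * (Real.pi : ℂ) * Complex.I) := by ring
  rw [h, Complex.exp_add, exp_int_two_pi, mul_one]

lemma theta_add_omega (z : ℂ) :
    θ (z + ω) = Complex.exp (-(Real.pi : ℂ) * Complex.I * ω
      - 2 * (Real.pi : ℂ) * Complex.I * z - (Real.pi : ℂ) * Complex.I) * θ z := by
  rw [θ_eq, θ_eq, mul_neg, ← tsum_mul_left, neg_inj]
  rw [← (Equiv.addRight (1 : ℤ)).tsum_eq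
    (fun n => Complex.exp (-(Real.pi : ℂ) * Complex.I * ω
      - 2 * (Real.pi : ℂ) * Complex.I * z - (Real.pi : ℂ) * Complex.I) * tf z n)]
  refine tsum_congr fun n => ?_
  simp only [Equiv.coe_addRight]
  rw [tf, tf, ← Complex.exp_add]
  congr 1
  push_cast
  ring

lemma theta_add_int (m : ℤ) (z : ℂ) :
    θ (z + (m : ℂ)) = Complex.exp ((Real.pi : ℂ) * Complex.I * (m : ℂ)) * θ z := by
  induction m using Int.induction_on with
  | zero => simp
  | succ i ih =>
    push_cast at ih ⊢
    rw [show z + ((i : ℂ) + 1) = (z + (i : ℂ)) + 1 by ring, theta_add_one, ih,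
      ← mul_assoc, ← Complex.exp_add]
    congr 2
    ring
  | pred i ih =>
    push_cast at ih ⊢
    have h := theta_add_one (z + (-(i : ℂ) - 1))
    rw [show z + (-(i : ℂ) - 1) + 1 = z + -(i : ℂ) by ring, ih] at h
    apply mul_left_cancel₀ (Complex.exp_ne_zero ((Real.pi : ℂ) * Complex.I))
    rw [← h, ← mul_assoc, ← Complex.exp_add]
    congr 2
    ring

lemma theta_add_int_omega (n : ℤ) (z : ℂ) :
    θ (z + (n : ℂ) * ω) = Complex.exp (-(Real.pi : ℂ) * Complex.I * (n : ℂ)^2 * ω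
      - 2 * (Real.pi : ℂ) * Complex.I * z * (n : ℂ) - (Real.pi : ℂ) * Complex.I * (n : ℂ)) * θ z := by
  induction n using Int.induction_on with
  | zero => simp
  | succ i ih =>
    push_cast at ih ⊢
    rw [show z + ((i : ℂ) + 1) * ω = (z + (i : ℂ) * ω) + ω by ring, theta_add_omega, ih,
      ← mul_assoc, ← Complex.exp_add]
    congr 2
    ring
  | pred i ih =>
    push_cast at ih ⊢
    have h := theta_add_omega (z + (-(i : ℂ) - 1) * ω)
    rw [show z + (-(i : ℂ) - 1) * ω + ω = z + -(i : ℂ) * ω by ring, ih] at h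
    apply mul_left_cancel₀ (Complex.exp_ne_zero (-(Real.pi : ℂ) * Complex.I * ω
      - 2 * (Real.pi : ℂ) * Complex.I * (z + (-(i : ℂ) - 1) * ω) - (Real.pi : ℂ) * Complex.I))
    rw [← h, ← mul_assoc, ← Complex.exp_add]
    congr 2
    ring

lemma omega_sub_conj : ω - (starRingEnd ℂ) ω = (Real.sqrt 3 : ℂ) * Complex.I := by
  have h : (2 * (Real.pi : ℂ) * Complex.I / 3) = ((2 * Real.pi / 3 : ℝ) : ℂ) * Complex.I := by
    push_cast; ring
  have hsin : Real.sin (2 * Real.pi / 3) = Real.sqrt 3 / 2 := by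
    rw [show (2 * Real.pi / 3) = Real.pi - Real.pi / 3 by ring, Real.sin_pi_sub,
      Real.sin_pi_div_three]
  rw [ω, h, Complex.exp_mul_I, map_add, map_mul, Complex.conj_I]
  rw [← Complex.ofReal_cos, ← Complex.ofReal_sin, Complex.conj_ofReal, Complex.conj_ofReal]
  rw [hsin]
  push_cast
  ring

theorem stmt3 (k : ℂ) (m n : ℤ) (z : ℂ) (hz : ¬ inΛ z) :
    F k (z + (m : ℂ) + (n : ℂ) * ω) = F k z := by
  have hconj : (starRingEnd ℂ) (z + (m : ℂ) + (n : ℂ) * ω)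
      = (starRingEnd ℂ) z + (m : ℂ) + (n : ℂ) * (starRingEnd ℂ) ω := by
    simp [map_add, map_mul]
  have hnum : θ (z + (m : ℂ) + (n : ℂ) * ω - zmap k)
      = Complex.exp (-(Real.pi : ℂ) * Complex.I * (n : ℂ)^2 * ω
        - 2 * (Real.pi : ℂ) * Complex.I * (z - zmap k + (m : ℂ)) * (n : ℂ)
        - (Real.pi : ℂ) * Complex.I * (n : ℂ))
        * (Complex.exp ((Real.pi : ℂ) * Complex.I * (m : ℂ)) * θ (z - zmap k)) := by
    rw [show z + (m : ℂ) + (n : ℂ) * ω - zmap k = (z - zmap k + (m : ℂ)) + (n : ℂ) * ω by ring,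
      theta_add_int_omega, theta_add_int]
  have hden : θ (z + (m : ℂ) + (n : ℂ) * ω)
      = Complex.exp (-(Real.pi : ℂ) * Complex.I * (n : ℂ)^2 * ω
        - 2 * (Real.pi : ℂ) * Complex.I * (z + (m : ℂ)) * (n : ℂ)
        - (Real.pi : ℂ) * Complex.I * (n : ℂ))
        * (Complex.exp ((Real.pi : ℂ) * Complex.I * (m : ℂ)) * θ z) := by
    rw [show z + (m : ℂ) + (n : ℂ) * ω = (z + (m : ℂ)) + (n : ℂ) * ω from rfl,
      theta_add_int_omega, theta_add_int]
  rw [F, F, hnum, hden, hconj]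
  set N := θ (z - zmap k)
  set D := θ z
  set a := -(Real.pi : ℂ) * Complex.I * (n : ℂ)^2 * ω
        - 2 * (Real.pi : ℂ) * Complex.I * (z - zmap k + (m : ℂ)) * (n : ℂ)
        - (Real.pi : ℂ) * Complex.I * (n : ℂ) with ha
  set b := -(Real.pi : ℂ) * Complex.I * (n : ℂ)^2 * ω
        - 2 * (Real.pi : ℂ) * Complex.I * (z + (m : ℂ)) * (n : ℂ)
        - (Real.pi : ℂ) * Complex.I * (n : ℂ) with hb
  set c := (Real.pi : ℂ) * Complex.I * (m : ℂ) with hc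
  set P₁ := (Complex.I / 2) * (z + (m : ℂ) + (n : ℂ) * ω
      - ((starRingEnd ℂ) z + (m : ℂ) + (n : ℂ) * (starRingEnd ℂ) ω)) * k with hP₁
  set P := (Complex.I / 2) * (z - (starRingEnd ℂ) z) * k with hP
  have key : Complex.exp P₁ * (Complex.exp a * (Complex.exp c * N))
      = Complex.exp P * Complex.exp b * Complex.exp c * N := by
    have hωc : (starRingEnd ℂ) ω = ω - (Real.sqrt 3 : ℂ) * Complex.I := by
      have := omega_sub_conj; linear_combination -this
    have hexp : P₁ + a + c = P + b + c := by
      rw [hP₁, ha, hc, hP, hb, hωc, zmap]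
      have hπ : (Real.pi : ℂ) ≠ 0 := by
        exact_mod_cast Real.pi_ne_zero
      field_simp
      linear_combination (4 * (n : ℂ) * (Real.sqrt 3 : ℂ) * k) *
        Complex.I_sq
    calc Complex.exp P₁ * (Complex.exp a * (Complex.exp c * N))
        = Complex.exp (P₁ + a + c) * N := by rw [Complex.exp_add, Complex.exp_add]; ring
      _ = Complex.exp (P + b + c) * N := by rw [hexp]
      _ = Complex.exp P * Complex.exp b * Complex.exp c * N := by
          rw [Complex.exp_add, Complex.exp_add]
  rw [key]
  have hb0 : Complex.exp b * (Complex.exp c * D) = (Complex.exp b * Complex.exp c) * D := by ring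
  rw [hb0]
  rw [show Complex.exp P * Complex.exp b * Complex.exp c * N
      = (Complex.exp b * Complex.exp c) * (Complex.exp P * N) by ring]
  exact mul_div_mul_left _ _ (mul_ne_zero (Complex.exp_ne_zero b) (Complex.exp_ne_zero c))

end
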